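/- For reals α ≥ 2 and λ₀ ∈ [0,1], with σ_γ² = (1−λ₀)/α, the degree-2 Rényi entropy formula holds: −ln( (α/(2πσ_γ²)) ∫_0^{4σ_γ²} x√((4σ_γ² − x)x) dx + λ₀² ) = −ln( (λ₀²(α+2) − 4λ₀ + 2)/α ). -/

import Mathlib

open Real intervalIntegral

lemma odd_part : ∫ u in (-1:ℝ)..1, u * Real.sqrt (1 - u ^ 2) = 0 := by
  have h := intervalIntegral.integral_comp_neg (a := (-1:ℝ)) (b := 1)
    (f := fun u => u * Real.sqrt (1 - u ^ 2))
  simp only [neg_neg] at h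
  have h2 : (∫ u in (-1:ℝ)..1, (-u) * Real.sqrt (1 - (-u) ^ 2))
      = ∫ u in (-1:ℝ)..1, -(u * Real.sqrt (1 - u ^ 2)) := by
    congr 1; funext u; ring_nf
  rw [h2, intervalIntegral.integral_neg] at h
  linarith

lemma semicircle (R : ℝ) (hR : 0 < R) :
    ∫ x in (0:ℝ)..R, x * Real.sqrt ((R - x) * x) = Real.pi * R ^ 3 / 16 := by
  have hc : (R / 2 : ℝ) ≠ 0 := by positivity
  have h := intervalIntegral.integral_comp_mul_add (a := (-1:ℝ)) (b := 1)
    (f := fun x => x * Real.sqrt ((R - x) * x)) hc (R / 2)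
  have hb1 : R / 2 * (-1) + R / 2 = 0 := by ring
  have hb2 : R / 2 * 1 + R / 2 = R := by ring
  rw [hb1, hb2, smul_eq_mul] at h
  have key : (∫ u in (-1:ℝ)..1, (fun x => x * Real.sqrt ((R - x) * x)) (R / 2 * u + R / 2))
      = (R / 2) ^ 2 * (Real.pi / 2) := by
    have hptw : ∀ u : ℝ, (R / 2 * u + R / 2) * Real.sqrt ((R - (R / 2 * u + R / 2)) * (R / 2 * u + R / 2))
        = (R / 2) ^ 2 * ((u + 1) * Real.sqrt (1 - u ^ 2)) := by
      intro u
      have e1 : (R - (R / 2 * u + R / 2)) * (R / 2 * u + R / 2) = (R / 2) ^ 2 * (1 - u ^ 2) := by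
        ring
      rw [e1, Real.sqrt_mul (sq_nonneg _), Real.sqrt_sq (by positivity : (0:ℝ) ≤ R / 2)]
      ring
    simp only [hptw]
    rw [intervalIntegral.integral_const_mul]
    have hsplit : (∫ u in (-1:ℝ)..1, (u + 1) * Real.sqrt (1 - u ^ 2))
        = (∫ u in (-1:ℝ)..1, u * Real.sqrt (1 - u ^ 2)) + ∫ u in (-1:ℝ)..1, Real.sqrt (1 - u ^ 2) := by
      rw [← intervalIntegral.integral_add]
      · congr 1; funext u; ring
      · exact (Continuous.mul continuous_id (by fun_prop)).intervalIntegrable _ _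
      · exact (by fun_prop : Continuous fun u : ℝ => Real.sqrt (1 - u ^ 2)).intervalIntegrable _ _
    rw [hsplit, odd_part, integral_sqrt_one_sub_sq]
    ring
  rw [key] at h
  have : ∫ x in (0:ℝ)..R, x * Real.sqrt ((R - x) * x)
      = (R / 2) * ((R / 2) ^ 2 * (Real.pi / 2)) := by
    field_simp at h
    have hc2 : (∫ x in (0:ℝ)..R, x * Real.sqrt (x * (R - x)))
        = ∫ x in (0:ℝ)..R, x * Real.sqrt ((R - x) * x) := by
      congr 1; funext x; rw [mul_comm x (R - x)]
    rw [hc2] at h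
    linarith [h]
  rw [this]; ring

theorem stmt15 (α l0 sg2 : ℝ) (hα : 2 ≤ α) (hl0 : 0 ≤ l0) (hl0' : l0 ≤ 1)
    (hsg2 : sg2 = (1 - l0) / α) :
    -Real.log (α / (2 * Real.pi * sg2) *
        (∫ x in (0:ℝ)..(4 * sg2), x * Real.sqrt ((4 * sg2 - x) * x)) + l0 ^ 2) =
    -Real.log ((l0 ^ 2 * (α + 2) - 4 * l0 + 2) / α) := by
  have hα0 : (0:ℝ) < α := by linarith
  rcases eq_or_lt_of_le hl0' with h1 | h1
  · subst h1
    have hs0 : sg2 = 0 := by rw [hsg2]; simp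
    rw [hs0]
    have e1 : α / (2 * Real.pi * 0) *
        (∫ x in (0:ℝ)..(4 * 0), x * Real.sqrt ((4 * 0 - x) * x)) + (1:ℝ) ^ 2 = 1 := by
      norm_num
    have e2 : ((1:ℝ) ^ 2 * (α + 2) - 4 * 1 + 2) / α = 1 := by
      field_simp
      try ring
    rw [e1, e2]
  · have hs : 0 < sg2 := by rw [hsg2]; exact div_pos (by linarith) hα0
    rw [semicircle (4 * sg2) (by linarith)]
    have hπ : Real.pi ≠ 0 := Real.pi_ne_zero
    have harg : α / (2 * Real.pi * sg2) * (Real.pi * (4 * sg2) ^ 3 / 16)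
        = 2 * α * sg2 ^ 2 := by
      field_simp
      ring
    rw [harg]
    congr 2
    rw [hsg2]
    field_simp
    ring
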